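/- The joint Lasso-regularized fsFGW problem reduces to an optimization over the transport plan alone: inf{ F_L(T,w) : T ∈ U(a,b), w ∈ [0,1]^d } = inf{ Σ_{r=1}^d min((1−α)·s_r(T), λ) + α GW(T) : T ∈ U(a,b) }. -/
import Mathlib


/-- A probability vector: nonnegative entries summing to 1. -/
def IsProb {n : ℕ} (a : Fin n → ℝ) : Prop := (∀ i, 0 ≤ a i) ∧ ∑ i, a i = 1

/-- Membership in the transport polytope U(a,b). -/
def InU {n m : ℕ} (a : Fin n → ℝ) (b : Fin m → ℝ) (T : Matrix (Fin n) (Fin m) ℝ) : Prop :=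
  (∀ i j, 0 ≤ T i j) ∧ (∀ i, ∑ j, T i j = a i) ∧ (∀ j, ∑ i, T i j = b j)

/-- Feature score `s_r(T) = Σ_{i,j} T_{ij} |X_{ir} − Y_{jr}|^q`. -/
noncomputable def score {n m d : ℕ} (q : ℝ) (X : Matrix (Fin n) (Fin d) ℝ)
    (Y : Matrix (Fin m) (Fin d) ℝ) (T : Matrix (Fin n) (Fin m) ℝ) (r : Fin d) : ℝ :=
  ∑ i, ∑ j, T i j * |X i r - Y j r| ^ q

/-- Gromov–Wasserstein term `GW(T) = Σ |C^X_{ii'} − C^Y_{jj'}|^q T_{ij} T_{i'j'}`. -/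
noncomputable def gwTerm {n m : ℕ} (q : ℝ) (CX : Matrix (Fin n) (Fin n) ℝ)
    (CY : Matrix (Fin m) (Fin m) ℝ) (T : Matrix (Fin n) (Fin m) ℝ) : ℝ :=
  ∑ i, ∑ i', ∑ j, ∑ j', |CX i i' - CY j j'| ^ q * T i j * T i' j'

/-- Lasso-regularized fsFGW objective. -/
noncomputable def FL {n m d : ℕ} (q α lam : ℝ)
    (CX : Matrix (Fin n) (Fin n) ℝ) (CY : Matrix (Fin m) (Fin m) ℝ)
    (X : Matrix (Fin n) (Fin d) ℝ) (Y : Matrix (Fin m) (Fin d) ℝ)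
    (T : Matrix (Fin n) (Fin m) ℝ) (w : Fin d → ℝ) : ℝ :=
  (1 - α) * ∑ r, (1 - w r) * score q X Y T r + α * gwTerm q CX CY T + lam * ∑ r, w r

lemma score_nonneg' {n m d : ℕ} (q : ℝ) (X : Matrix (Fin n) (Fin d) ℝ)
    (Y : Matrix (Fin m) (Fin d) ℝ) (T : Matrix (Fin n) (Fin m) ℝ)
    (hT : ∀ i j, 0 ≤ T i j) (r : Fin d) : 0 ≤ score q X Y T r := by
  apply Finset.sum_nonneg; intro i _
  apply Finset.sum_nonneg; intro j _
  exact mul_nonneg (hT i j) (Real.rpow_nonneg (abs_nonneg _) q)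

lemma gw_nonneg' {n m : ℕ} (q : ℝ) (CX : Matrix (Fin n) (Fin n) ℝ)
    (CY : Matrix (Fin m) (Fin m) ℝ) (T : Matrix (Fin n) (Fin m) ℝ)
    (hT : ∀ i j, 0 ≤ T i j) : 0 ≤ gwTerm q CX CY T := by
  apply Finset.sum_nonneg; intro i _
  apply Finset.sum_nonneg; intro i' _
  apply Finset.sum_nonneg; intro j _
  apply Finset.sum_nonneg; intro j' _
  exact mul_nonneg (mul_nonneg (Real.rpow_nonneg (abs_nonneg _) q) (hT i j)) (hT i' j')

/-- the joint Lasso fsFGW problem reduces to an optimization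
over the transport plan alone. -/
theorem lasso_fsFGW_reduction (n m d : ℕ) (hn : 1 ≤ n) (hm : 1 ≤ m) (hd : 1 ≤ d)
    (q : ℝ) (hq : 1 ≤ q) (α lam : ℝ) (hα : α ∈ Set.Icc (0:ℝ) 1) (hlam : 0 < lam)
    (a : Fin n → ℝ) (b : Fin m → ℝ) (ha : IsProb a) (hb : IsProb b)
    (CX : Matrix (Fin n) (Fin n) ℝ) (CY : Matrix (Fin m) (Fin m) ℝ)
    (X : Matrix (Fin n) (Fin d) ℝ) (Y : Matrix (Fin m) (Fin d) ℝ) :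
    sInf {v : ℝ | ∃ T w, InU a b T ∧ (∀ r, w r ∈ Set.Icc (0:ℝ) 1) ∧
        v = FL q α lam CX CY X Y T w}
      = sInf {v : ℝ | ∃ T, InU a b T ∧
        v = (∑ r, min ((1 - α) * score q X Y T r) lam) + α * gwTerm q CX CY T} := by
  obtain ⟨hα0, hα1⟩ := hα
  set A := {v : ℝ | ∃ T w, InU a b T ∧ (∀ r, w r ∈ Set.Icc (0:ℝ) 1) ∧
        v = FL q α lam CX CY X Y T w} with hAdef
  set B := {v : ℝ | ∃ T, InU a b T ∧
        v = (∑ r, min ((1 - α) * score q X Y T r) lam) + α * gwTerm q CX CY T} with hBdef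
  -- the product plan
  have hT0 : InU a b (fun i j => a i * b j) := by
    refine ⟨fun i j => mul_nonneg (ha.1 i) (hb.1 j), fun i => ?_, fun j => ?_⟩
    · rw [← Finset.mul_sum, hb.2, mul_one]
    · rw [← Finset.sum_mul, ha.2, one_mul]
  -- A is bounded below by 0
  have hAbdd : ∀ v ∈ A, (0:ℝ) ≤ v := by
    rintro v ⟨T, w, hT, hw, rfl⟩
    have hs := fun r => score_nonneg' q X Y T hT.1 r
    have hg := gw_nonneg' q CX CY T hT.1
    have h1 : 0 ≤ ∑ r, (1 - w r) * score q X Y T r :=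
      Finset.sum_nonneg fun r _ => mul_nonneg (by linarith [(hw r).2]) (hs r)
    have h2 : 0 ≤ ∑ r : Fin d, w r := Finset.sum_nonneg fun r _ => (hw r).1
    unfold FL
    have := mul_nonneg (by linarith : (0:ℝ) ≤ 1 - α) h1
    have := mul_nonneg hα0 hg
    have := mul_nonneg hlam.le h2
    linarith
  have hBbdd : ∀ v ∈ B, (0:ℝ) ≤ v := by
    rintro v ⟨T, hT, rfl⟩
    have hg := gw_nonneg' q CX CY T hT.1
    have h1 : 0 ≤ ∑ r, min ((1 - α) * score q X Y T r) lam :=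
      Finset.sum_nonneg fun r _ => le_min
        (mul_nonneg (by linarith) (score_nonneg' q X Y T hT.1 r)) hlam.le
    have := mul_nonneg hα0 hg
    linarith
  -- B ⊆ A
  have hBA : B ⊆ A := by
    rintro v ⟨T, hT, rfl⟩
    refine ⟨T, fun r => if (1 - α) * score q X Y T r ≤ lam then 0 else 1, hT,
      fun r => ?_, ?_⟩
    · by_cases h : (1 - α) * score q X Y T r ≤ lam <;> simp [h]
    · unfold FL
      have key : (1 - α) * ∑ r, (1 - (if (1 - α) * score q X Y T r ≤ lam then (0:ℝ) else 1))
            * score q X Y T r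
          + lam * ∑ r, (if (1 - α) * score q X Y T r ≤ lam then (0:ℝ) else 1)
          = ∑ r, min ((1 - α) * score q X Y T r) lam := by
        rw [Finset.mul_sum, Finset.mul_sum, ← Finset.sum_add_distrib]
        refine Finset.sum_congr rfl fun r _ => ?_
        by_cases h : (1 - α) * score q X Y T r ≤ lam
        · simp only [if_pos h, min_eq_left h]; ring
        · simp only [if_neg h, min_eq_right (le_of_not_ge h)]; ring
      linarith
  have hBne : B.Nonempty := ⟨_, ⟨(fun i j => a i * b j), hT0, rfl⟩⟩
  have hAne : A.Nonempty := ⟨hBne.choose, hBA hBne.choose_spec⟩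
  apply le_antisymm
  · exact csInf_le_csInf ⟨0, hAbdd⟩ hBne hBA
  · apply le_csInf hAne
    rintro v ⟨T, w, hT, hw, rfl⟩
    have hmem : (∑ r, min ((1 - α) * score q X Y T r) lam) + α * gwTerm q CX CY T ∈ B :=
      ⟨T, hT, rfl⟩
    refine le_trans (csInf_le ⟨0, hBbdd⟩ hmem) ?_
    unfold FL
    have key : ∑ r, min ((1 - α) * score q X Y T r) lam
        ≤ (1 - α) * ∑ r, (1 - w r) * score q X Y T r + lam * ∑ r, w r := by
      rw [Finset.mul_sum, Finset.mul_sum, ← Finset.sum_add_distrib]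
      refine Finset.sum_le_sum fun r _ => ?_
      have hs := score_nonneg' q X Y T hT.1 r
      have hw0 := (hw r).1
      have hw1 := (hw r).2
      rcases le_total ((1 - α) * score q X Y T r) lam with h | h
      · rw [min_eq_left h]; nlinarith
      · rw [min_eq_right h]; nlinarith
    linarith
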